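/- (Lemma 5) For each fixed integer n ≥ 1, as θ ↑ 0 (θ real and negative, so that e^θ ∈ (0,1)), the quantity (Δ_n(e^θ)/u(e^θ)^n − θ/(1−β))/θ² converges to a finite limit; that is, Δ_n(e^θ)/u(e^θ)^n = θ/(1−β) + O*(θ²) as θ ↑ 0. -/

import Mathlib

open Filter Topology

open Set

lemma pgfCont (c : ℕ → ℝ) (hs : Summable c) :
    ContinuousOn (fun s : ℝ => ∑' k, c k * s ^ k) (Set.Icc (-1:ℝ) 1) := by
  apply continuousOn_tsum (u := fun k => |c k|) (fun i => (continuous_pow i).continuousOn.const_smul (c i)) hs.abs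
  intro k x hx
  have hx1 : |x| ≤ 1 := abs_le.2 ⟨hx.1, hx.2⟩
  calc ‖c k * x ^ k‖ = |c k| * |x| ^ k := by rw [norm_mul, norm_pow]; rfl
  _ ≤ |c k| * 1 ^ k := by gcongr
  _ = |c k| := by simp

lemma pgfSummable (c : ℕ → ℝ) (hs : Summable c) {x : ℝ} (hx : |x| ≤ 1) :
    Summable (fun k => c k * x ^ k) := by
  apply Summable.of_norm_bounded hs.abs
  intro k
  calc ‖c k * x ^ k‖ = |c k| * |x| ^ k := by rw [norm_mul, norm_pow]; rfl
  _ ≤ |c k| * 1 ^ k := by gcongr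
  _ = |c k| := by simp

lemma pgfDerivSummAux {r : ℝ} (hr0 : 0 ≤ r) (hr : r < 1) :
    Summable (fun k : ℕ => (k : ℝ) * r ^ (k - 1)) := by
  rw [← summable_nat_add_iff 1]
  have heq : ∀ k : ℕ, ((k + 1 : ℕ) : ℝ) * r ^ ((k + 1) - 1) = (k:ℝ) * r ^ k + r ^ k := by
    intro k
    have : (k + 1) - 1 = k := rfl
    rw [this]; push_cast; ring
  apply Summable.congr _ (fun k => (heq k).symm)
  have h1 : Summable (fun k : ℕ => (k:ℝ) * r ^ k) := by
    have := summable_pow_mul_geometric_of_norm_lt_one (R := ℝ) (k := 1) (r := r)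
      (by rwa [Real.norm_eq_abs, abs_of_nonneg hr0])
    simpa using this
  exact h1.add (summable_geometric_of_lt_one hr0 hr)

lemma pgfBdd (c : ℕ → ℝ) (hs : Summable c) : ∃ Cb : ℝ, ∀ k, |c k| ≤ Cb := by
  have h0 : Tendsto (fun k => |c k|) atTop (𝓝 0) := hs.abs.tendsto_atTop_zero
  obtain ⟨Cb, hCb⟩ := h0.bddAbove_range
  exact ⟨Cb, fun k => hCb ⟨k, rfl⟩⟩

lemma pgfHasDeriv (c : ℕ → ℝ) (hs : Summable c) {t : ℝ} (ht : |t| < 1) :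
    HasDerivAt (fun s : ℝ => ∑' k, c k * s ^ k)
      (∑' k : ℕ, ((k:ℝ) + 1) * c (k + 1) * t ^ k) t := by
  obtain ⟨Cb, hCb⟩ := pgfBdd c hs
  set r : ℝ := (1 + |t|) / 2 with hrdef
  have hr0 : 0 ≤ r := by positivity
  have hrt : |t| < r := by rw [hrdef]; linarith
  have hr1 : r < 1 := by rw [hrdef]; linarith
  have htmem : t ∈ Set.Ioo (-r) r := ⟨(abs_lt.1 hrt).1, (abs_lt.1 hrt).2⟩
  have hu : Summable (fun k : ℕ => Cb * ((k:ℝ) * r ^ (k-1))) :=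
    (pgfDerivSummAux hr0 hr1).mul_left Cb
  have hbound : ∀ (k : ℕ) (y : ℝ), y ∈ Set.Ioo (-r) r →
      ‖c k * ((k:ℝ) * y ^ (k-1))‖ ≤ Cb * ((k:ℝ) * r ^ (k-1)) := by
    intro k y hy
    have hyr : |y| ≤ r := le_of_lt (abs_lt.2 ⟨hy.1, hy.2⟩)
    have h0 : ‖c k * ((k:ℝ) * y ^ (k-1))‖ = |c k| * ((k:ℝ) * |y| ^ (k-1)) := by
      rw [norm_mul, norm_mul, norm_pow, Real.norm_natCast]; rfl
    rw [h0]
    apply mul_le_mul (hCb k) _ (by positivity) ((abs_nonneg _).trans (hCb k))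
    exact mul_le_mul_of_nonneg_left (pow_le_pow_left₀ (abs_nonneg y) hyr _) (Nat.cast_nonneg k)
  have hsum : Summable (fun k => c k * ((k:ℝ) * t ^ (k-1))) := by
    apply Summable.of_norm_bounded hu
    intro k; exact hbound k t htmem
  have hD : HasDerivAt (fun s : ℝ => ∑' k, c k * s ^ k)
      (∑' k, c k * ((k:ℝ) * t ^ (k-1))) t := by
    refine hasDerivAt_tsum_of_isPreconnected hu isOpen_Ioo
      (convex_Ioo _ _).isPreconnected
      (fun k y _ => (hasDerivAt_pow k y).const_mul (c k)) hbound
      (y₀ := 0) ⟨by linarith [abs_nonneg t], by linarith [abs_nonneg t]⟩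
      (pgfSummable c hs (by simp)) htmem
  convert hD using 1
  rw [Summable.tsum_eq_zero_add hsum]
  simp only [Nat.cast_zero, zero_mul, mul_zero, zero_add]
  apply tsum_congr
  intro k
  have : (k + 1) - 1 = k := rfl
  rw [this]; push_cast; ring

lemma pgfDSummable (c : ℕ → ℝ) (hs : Summable c) {x : ℝ} (hx : |x| < 1) :
    Summable (fun k : ℕ => ((k:ℝ) + 1) * c (k + 1) * x ^ k) := by
  obtain ⟨Cb, hCb⟩ := pgfBdd c hs
  have h1 : Summable (fun k : ℕ => Cb * (((k:ℝ) + 1) * |x| ^ k)) := by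
    apply Summable.mul_left
    have := summable_pow_mul_geometric_of_norm_lt_one (R := ℝ) (k := 1) (r := |x|)
      (by rwa [Real.norm_eq_abs, abs_abs])
    simp only [pow_one] at this
    exact Summable.congr (this.add (summable_geometric_of_lt_one (abs_nonneg x) hx))
      (fun k => by ring)
  apply Summable.of_norm_bounded h1
  intro k
  rw [norm_mul, norm_mul, norm_pow, Real.norm_eq_abs, Real.norm_eq_abs, Real.norm_eq_abs,
    abs_of_nonneg (by positivity : (0:ℝ) ≤ (k:ℝ)+1)]
  calc ((k:ℝ)+1) * |c (k+1)| * |x| ^ k ≤ ((k:ℝ)+1) * Cb * |x| ^ k := by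
        gcongr; exact hCb _
  _ = Cb * (((k:ℝ)+1) * |x| ^ k) := by ring

lemma pgfTermBnd {x : ℝ} (hx0 : 0 ≤ x) (hx1 : x ≤ 1) (j : ℕ) :
    ((j:ℝ) + 1) * x ^ j * (1 - x) ≤ 1 := by
  have hsum : ((j:ℝ) + 1) * x ^ j ≤ ∑ i ∈ Finset.range (j+1), x ^ i := by
    have : ∀ i ∈ Finset.range (j+1), x ^ j ≤ x ^ i := by
      intro i hi
      exact pow_le_pow_of_le_one hx0 hx1 (Nat.lt_succ_iff.1 (Finset.mem_range.1 hi))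
    calc ((j:ℝ) + 1) * x ^ j = ∑ _i ∈ Finset.range (j+1), x ^ j := by
          rw [Finset.sum_const, Finset.card_range]; push_cast; ring
    _ ≤ ∑ i ∈ Finset.range (j+1), x ^ i := Finset.sum_le_sum this
  have h2 : (∑ i ∈ Finset.range (j+1), x ^ i) * (1 - x) = 1 - x ^ (j+1) := by
    have := geom_sum_mul x (j+1)
    nlinarith [this]
  calc ((j:ℝ)+1) * x ^ j * (1-x) ≤ (∑ i ∈ Finset.range (j+1), x ^ i) * (1-x) := by
        apply mul_le_mul_of_nonneg_right hsum (by linarith)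
  _ = 1 - x ^ (j+1) := h2
  _ ≤ 1 := by nlinarith [pow_nonneg hx0 (j+1)]

lemma pgfDMono (c : ℕ → ℝ) (hc : ∀ k, 0 ≤ c k) (hs : Summable c) {y x : ℝ}
    (hy0 : 0 ≤ y) (hyx : y ≤ x) (hx : x < 1) :
    (∑' k : ℕ, ((k:ℝ) + 1) * c (k + 1) * y ^ k) ≤ ∑' k : ℕ, ((k:ℝ) + 1) * c (k + 1) * x ^ k := by
  apply Summable.tsum_le_tsum _ (pgfDSummable c hs (by rw [abs_of_nonneg hy0]; linarith))
    (pgfDSummable c hs (by rw [abs_of_nonneg (hy0.trans hyx)]; linarith))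
  intro k
  have : y ^ k ≤ x ^ k := pow_le_pow_left₀ hy0 hyx k
  have h2 : (0:ℝ) ≤ ((k:ℝ)+1) * c (k+1) := mul_nonneg (by positivity) (hc _)
  exact mul_le_mul_of_nonneg_left this h2

lemma pgfDNonneg (c : ℕ → ℝ) (hc : ∀ k, 0 ≤ c k) {x : ℝ} (hx0 : 0 ≤ x) :
    0 ≤ ∑' k : ℕ, ((k:ℝ) + 1) * c (k + 1) * x ^ k := by
  apply tsum_nonneg
  intro k
  exact mul_nonneg (mul_nonneg (by positivity) (hc _)) (pow_nonneg hx0 _)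

set_option maxHeartbeats 1000000 in
lemma pgfSmall (c : ℕ → ℝ) (hc : ∀ k, 0 ≤ c k) (hs : Summable c) :
    Tendsto (fun x : ℝ => (1 - x) * ∑' k : ℕ, ((k:ℝ) + 1) * c (k + 1) * x ^ k)
      (𝓝[<] (1:ℝ)) (𝓝 0) := by
  rw [NormedAddCommGroup.tendsto_nhds_zero]
  intro ε hε
  have htail : Tendsto (fun m => ∑' k, c (k + m)) atTop (𝓝 0) := tendsto_sum_nat_add c
  have htail2 : Tendsto (fun m : ℕ => ∑' k, c (k + (m + 1))) atTop (𝓝 0) :=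
    htail.comp (tendsto_add_atTop_nat 1)
  obtain ⟨K, hK⟩ : ∃ K : ℕ, ∑' k, c (k + (K + 1)) < ε / 2 :=
    (htail2.eventually (eventually_lt_nhds (by linarith : (0:ℝ) < ε / 2))).exists
  set Chead : ℝ := ∑ k ∈ Finset.range K, ((k:ℝ) + 1) * c (k + 1) with hChead
  have hChead_nn : 0 ≤ Chead := Finset.sum_nonneg (fun k _ => mul_nonneg (by positivity) (hc _))
  have hIoo : Set.Ioo (0:ℝ) 1 ∈ 𝓝[<] (1:ℝ) :=
    Ioo_mem_nhdsLT_of_mem (by norm_num : (1:ℝ) ∈ Set.Ioc (0:ℝ) 1)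
  have hsmall : ∀ᶠ x : ℝ in 𝓝[<] (1:ℝ), (1 - x) * Chead < ε / 2 := by
    have hcont : Tendsto (fun x : ℝ => (1 - x) * Chead) (𝓝[<] (1:ℝ)) (𝓝 0) := by
      have : Tendsto (fun x : ℝ => (1 - x) * Chead) (𝓝 (1:ℝ)) (𝓝 ((1 - 1) * Chead)) :=
        (Continuous.tendsto (by continuity) 1)
      simpa using this.mono_left nhdsWithin_le_nhds
    exact hcont.eventually (eventually_lt_nhds (by linarith : (0:ℝ) < ε / 2))
  filter_upwards [hIoo, hsmall] with x hx hxs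
  have hx0 : 0 ≤ x := le_of_lt hx.1
  have hx1 : x < 1 := hx.2
  have hsumD : Summable (fun k : ℕ => ((k:ℝ) + 1) * c (k + 1) * x ^ k) :=
    pgfDSummable c hs (by rw [abs_of_nonneg hx0]; exact hx1)
  -- split the series at K
  have hsplit := (Summable.sum_add_tsum_nat_add K hsumD).symm
  have hterm_nn : ∀ k : ℕ, 0 ≤ ((k:ℝ) + 1) * c (k + 1) * x ^ k :=
    fun k => mul_nonneg (mul_nonneg (by positivity) (hc _)) (pow_nonneg hx0 _)
  have hval_nn : 0 ≤ (1 - x) * ∑' k : ℕ, ((k:ℝ) + 1) * c (k + 1) * x ^ k :=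
    mul_nonneg (by linarith) (tsum_nonneg hterm_nn)
  rw [Real.norm_eq_abs, abs_of_nonneg hval_nn, hsplit, mul_add]
  -- head bound
  have hhead : (1 - x) * ∑ k ∈ Finset.range K, ((k:ℝ) + 1) * c (k + 1) * x ^ k
      ≤ (1 - x) * Chead := by
    apply mul_le_mul_of_nonneg_left _ (by linarith)
    apply Finset.sum_le_sum
    intro k _
    calc ((k:ℝ) + 1) * c (k + 1) * x ^ k ≤ ((k:ℝ) + 1) * c (k + 1) * 1 := by
          apply mul_le_mul_of_nonneg_left (pow_le_one₀ hx0 (le_of_lt hx1))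
            (mul_nonneg (by positivity) (hc _))
    _ = ((k:ℝ) + 1) * c (k + 1) := mul_one _
  -- tail bound
  have htailsum : Summable (fun k : ℕ => (((k + K : ℕ):ℝ) + 1) * c ((k + K) + 1) * x ^ (k + K)) :=
    (summable_nat_add_iff K).2 hsumD
  have hle : ∀ k : ℕ, (1 - x) * ((((k + K : ℕ):ℝ) + 1) * c ((k + K) + 1) * x ^ (k + K))
      ≤ c (k + (K + 1)) := by
    intro k
    have hb := pgfTermBnd hx0 (le_of_lt hx1) (k + K)
    have heq : (1 - x) * ((((k + K : ℕ):ℝ) + 1) * c ((k + K) + 1) * x ^ (k + K))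
        = c ((k + K) + 1) * ((((k+K:ℕ):ℝ) + 1) * x ^ (k + K) * (1 - x)) := by ring
    rw [heq]
    calc c ((k + K) + 1) * ((((k+K:ℕ):ℝ) + 1) * x ^ (k + K) * (1 - x))
        ≤ c ((k + K) + 1) * 1 := mul_le_mul_of_nonneg_left hb (hc _)
    _ = c (k + (K + 1)) := by rw [mul_one, Nat.add_assoc]
  have hS1 : Summable (fun k : ℕ => (1 - x) * ((((k + K : ℕ):ℝ) + 1) * c ((k + K) + 1) * x ^ (k + K))) :=
    htailsum.mul_left _
  have hS2 : Summable (fun k : ℕ => c (k + (K + 1))) := (summable_nat_add_iff (K+1)).2 hs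
  have htailb : (1 - x) * ∑' k : ℕ, (((k + K : ℕ):ℝ) + 1) * c ((k + K) + 1) * x ^ (k + K)
      ≤ ∑' k, c (k + (K + 1)) := by
    rw [← tsum_mul_left]
    exact Summable.tsum_le_tsum hle hS1 hS2
  calc (1 - x) * (∑ k ∈ Finset.range K, ((k:ℝ) + 1) * c (k + 1) * x ^ k)
        + (1 - x) * ∑' k : ℕ, (((k + K : ℕ):ℝ) + 1) * c ((k + K) + 1) * x ^ (k + K)
      ≤ (1 - x) * Chead + ∑' k, c (k + (K + 1)) := add_le_add hhead htailb
  _ < ε / 2 + ε / 2 := by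
      apply add_lt_add_of_lt_of_le hxs (le_of_lt hK)
  _ = ε := by ring


/- Setup: `fq` is the probability generating function of a subcritical offspring law `π`
(with derivative functions `fq'`, `fq''` given by the differentiated power series, so that
`fq' 1`, `fq'' 1` are the left limits at `1`), mean `β = fq'(1-) ∈ (0,1)`, finite
`b_q = fq''(1-)`, `γ_q = b_q/(β(1-β))`; `H` is the recursively defined two-variable
generating function `H 0 s x = s`, `H (n+1) s x = x · fq (H n s x)` (so `h_n x = H n 1 x`),
and `h x = lim_n H n 1 x` is the total-progeny generating function, satisfying
`h x = x · fq (h x)` and `h 1 = 1`. -/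
set_option maxHeartbeats 2000000 in
theorem Delta_over_u_pow_expansion
    (π : ℕ → ℝ) (hπ_nn : ∀ k, 0 ≤ π k) (hπ_sum : ∑' k, π k = 1)
    (hπ0 : 0 < π 0) (hπ01 : π 0 + π 1 < 1)
    (fq fq' fq'' : ℝ → ℝ)
    (hfq : ∀ s, fq s = ∑' k, π k * s ^ k)
    (hfq' : ∀ s, fq' s = ∑' k : ℕ, ((k : ℝ) + 1) * π (k + 1) * s ^ k)
    (hfq'' : ∀ s, fq'' s = ∑' k : ℕ, ((k : ℝ) + 2) * ((k : ℝ) + 1) * π (k + 2) * s ^ k)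
    (β : ℝ) (hβ : β = fq' 1) (hβ_pos : 0 < β) (hβ_lt : β < 1)
    (bq : ℝ) (hbq : bq = fq'' 1)
    (hbq_fin : Summable fun k : ℕ => ((k : ℝ) + 2) * ((k : ℝ) + 1) * π (k + 2))
    (γq : ℝ) (hγq : γq = bq / (β * (1 - β)))
    (H : ℕ → ℝ → ℝ → ℝ)
    (hH0 : ∀ s x : ℝ, H 0 s x = s)
    (hHrec : ∀ (n : ℕ) (s x : ℝ), H (n + 1) s x = x * fq (H n s x))
    (h : ℝ → ℝ)
    (hh_lim : ∀ x ∈ Set.Icc (0 : ℝ) 1, Tendsto (fun n => H n 1 x) atTop (𝓝 (h x)))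
    (hh_fix : ∀ x ∈ Set.Icc (0 : ℝ) 1, h x = x * fq (h x))
    (hh_one : h 1 = 1)
    (u : ℝ → ℝ) (hu : ∀ x, u x = x * fq' (h x)) :
    ∀ n : ℕ, 1 ≤ n →
      ∃ C : ℝ, Tendsto (fun θ =>
          ((h (Real.exp θ) - H n 1 (Real.exp θ)) / u (Real.exp θ) ^ n - θ / (1 - β)) / θ ^ 2)
        (𝓝[<] 0) (𝓝 C) := by
  -- Stage A : basic facts about the power series fq, fq', fq''
  have hβ1 : (1:ℝ) - β ≠ 0 := by intro hc; nlinarith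
  have hπS : Summable π := by
    by_contra hns
    rw [tsum_eq_zero_of_not_summable hns] at hπ_sum
    norm_num at hπ_sum
  have ha2 : Summable (fun k : ℕ => ((k:ℝ) + 2) * ((k:ℝ) + 1) * π (k + 2)) := hbq_fin
  have ha1 : Summable (fun k : ℕ => ((k:ℝ) + 1) * π (k + 1)) := by
    rw [← summable_nat_add_iff 1]
    apply Summable.of_nonneg_of_le
      (fun k => mul_nonneg (by positivity) (hπ_nn _)) (fun k => ?_) ha2
    have heq : (((k + 1 : ℕ):ℝ) + 1) * π ((k + 1) + 1) = ((k:ℝ) + 2) * π (k + 2) := by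
      push_cast; ring_nf
    rw [heq]
    nlinarith [hπ_nn (k+2), mul_nonneg (mul_nonneg (Nat.cast_nonneg (α := ℝ) k)
      (by positivity : (0:ℝ) ≤ (k:ℝ)+2)) (hπ_nn (k+2))]
  have fq1 : fq 1 = 1 := by rw [hfq]; simpa using hπ_sum
  -- derivative facts
  have hfqD : ∀ t : ℝ, |t| < 1 → HasDerivAt fq (fq' t) t := by
    intro t ht
    rw [hfq' t]
    exact (pgfHasDeriv π hπS ht).congr_of_eventuallyEq (Eventually.of_forall hfq)
  have hfq'D : ∀ t : ℝ, |t| < 1 → HasDerivAt fq' (fq'' t) t := by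
    intro t ht
    have := (pgfHasDeriv (fun k => ((k:ℝ) + 1) * π (k + 1)) ha1 ht).congr_of_eventuallyEq
      (Eventually.of_forall hfq')
    rw [hfq'' t]
    refine HasDerivAt.congr_deriv this (Eq.symm ?_)
    apply tsum_congr; intro k; push_cast; ring
  have hfq''D : ∀ t : ℝ, |t| < 1 → HasDerivAt fq''
      (∑' k : ℕ, ((k:ℝ) + 1) * (((k+1:ℕ):ℝ) + 2) * (((k+1:ℕ):ℝ) + 1) * π ((k+1) + 2) * t ^ k) t := by
    intro t ht
    have := (pgfHasDeriv (fun k => ((k:ℝ) + 2) * ((k:ℝ) + 1) * π (k + 2)) ha2 ht).congr_of_eventuallyEq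
      (Eventually.of_forall hfq'')
    refine HasDerivAt.congr_deriv this (Eq.symm ?_)
    apply tsum_congr; intro k; push_cast; ring
  -- continuity on [0,1]
  have hsub : Set.Icc (0:ℝ) 1 ⊆ Set.Icc (-1:ℝ) 1 := fun y hy => ⟨by linarith [hy.1], hy.2⟩
  have Cfq : ContinuousWithinAt fq (Set.Icc (0:ℝ) 1) 1 := by
    have := ((pgfCont π hπS).congr (fun s _ => (hfq s))).mono hsub
    exact this 1 (by norm_num)
  have Cfq' : ContinuousWithinAt fq' (Set.Icc (0:ℝ) 1) 1 := by
    have := ((pgfCont _ ha1).congr (fun s _ => (hfq' s))).mono hsub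
    exact this 1 (by norm_num)
  have Cfq'' : ContinuousWithinAt fq'' (Set.Icc (0:ℝ) 1) 1 := by
    have := ((pgfCont _ ha2).congr (fun s _ => (hfq'' s))).mono hsub
    exact this 1 (by norm_num)
  -- bounds
  have hfqnn : ∀ t ∈ Set.Icc (0:ℝ) 1, 0 ≤ fq t := by
    intro t ht
    rw [hfq]
    exact tsum_nonneg (fun k => mul_nonneg (hπ_nn k) (pow_nonneg ht.1 k))
  have hfqmono : ∀ s ∈ Set.Icc (0:ℝ) 1, ∀ t ∈ Set.Icc (0:ℝ) 1, s ≤ t → fq s ≤ fq t := by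
    intro s hs t ht hst
    rw [hfq, hfq]
    apply Summable.tsum_le_tsum _ (pgfSummable π hπS (abs_le.2 ⟨by linarith [hs.1], hs.2⟩))
      (pgfSummable π hπS (abs_le.2 ⟨by linarith [ht.1], ht.2⟩))
    intro k
    exact mul_le_mul_of_nonneg_left (pow_le_pow_left₀ hs.1 hst k) (hπ_nn k)
  have hfqle1 : ∀ t ∈ Set.Icc (0:ℝ) 1, fq t ≤ 1 := by
    intro t ht
    calc fq t ≤ fq 1 := hfqmono t ht 1 (by norm_num) ht.2
    _ = 1 := fq1
  have hfqpos : ∀ t ∈ Set.Icc (0:ℝ) 1, 0 < fq t := by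
    intro t ht
    have : π 0 * t ^ 0 ≤ fq t := by
      rw [hfq]
      exact Summable.le_tsum (pgfSummable π hπS (abs_le.2 ⟨by linarith [ht.1], ht.2⟩)) 0
        (fun k _ => mul_nonneg (hπ_nn k) (pow_nonneg ht.1 k))
    simp only [pow_zero, mul_one] at this
    linarith
  have hfq'nn : ∀ t ∈ Set.Icc (0:ℝ) 1, 0 ≤ fq' t := by
    intro t ht
    rw [hfq']
    exact tsum_nonneg (fun k => mul_nonneg (mul_nonneg (by positivity) (hπ_nn _)) (pow_nonneg ht.1 k))
  have hfq'mono : ∀ s ∈ Set.Icc (0:ℝ) 1, ∀ t ∈ Set.Icc (0:ℝ) 1, s ≤ t → fq' s ≤ fq' t := by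
    intro s hs t ht hst
    rw [hfq', hfq']
    apply Summable.tsum_le_tsum _ (pgfSummable _ ha1 (abs_le.2 ⟨by linarith [hs.1], hs.2⟩))
      (pgfSummable _ ha1 (abs_le.2 ⟨by linarith [ht.1], ht.2⟩))
    intro k
    exact mul_le_mul_of_nonneg_left (pow_le_pow_left₀ hs.1 hst k)
      (mul_nonneg (by positivity) (hπ_nn _))
  have hfq'le : ∀ t ∈ Set.Icc (0:ℝ) 1, fq' t ≤ β := by
    intro t ht
    rw [hβ]
    exact hfq'mono t ht 1 (by norm_num) ht.2
  have hπex : ∃ j : ℕ, 0 < π (j + 1) := by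
    by_contra hc
    push_neg at hc
    have hz : ∀ j : ℕ, π (j + 1) = 0 := fun j => le_antisymm (hc j) (hπ_nn _)
    have : ∑' k, π k = π 0 := by
      rw [Summable.tsum_eq_zero_add hπS]
      simp [hz]
    rw [hπ_sum] at this
    have hπ1 : π 1 = 0 := hz 0
    rw [hπ1] at hπ01
    linarith
  have hfq'pos : ∀ t : ℝ, 0 < t → t ≤ 1 → 0 < fq' t := by
    intro t ht0 ht1
    obtain ⟨j, hj⟩ := hπex
    have hle : ((j:ℝ) + 1) * π (j + 1) * t ^ j ≤ fq' t := by
      rw [hfq']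
      exact Summable.le_tsum (pgfSummable _ ha1 (abs_le.2 ⟨by linarith, ht1⟩)) j
        (fun k _ => mul_nonneg (mul_nonneg (by positivity) (hπ_nn _)) (pow_nonneg (le_of_lt ht0) k))
    have : 0 < ((j:ℝ) + 1) * π (j + 1) * t ^ j := by positivity
    linarith
    -- Stage B : key inequality  1 - β ≤ fq t - t * fq' t  on [0,1]
  have fqkey : ∀ t ∈ Set.Icc (0:ℝ) 1, 1 - β ≤ fq t - t * fq' t := by
    intro t ht
    have habs : |t| ≤ 1 := abs_le.2 ⟨by linarith [ht.1], ht.2⟩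
    have hSπ : Summable (fun k => π k * t ^ k) := pgfSummable π hπS habs
    have hSπ1 : Summable (fun k => π k * (1:ℝ) ^ k) := pgfSummable π hπS (by norm_num)
    have hSa : Summable (fun k : ℕ => (((k:ℝ) + 1) * π (k + 1)) * t ^ k) := pgfSummable _ ha1 habs
    have hSa1 : Summable (fun k : ℕ => (((k:ℝ) + 1) * π (k + 1)) * (1:ℝ) ^ k) :=
      pgfSummable _ ha1 (by norm_num)
    have ht1k : ∀ k : ℕ, 0 ≤ 1 - t ^ (k+1) := by
      intro k
      have := pow_le_one₀ ht.1 ht.2 (n := k+1)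
      linarith
    have e1 : fq 1 - fq t = ∑' k : ℕ, π (k+1) * (1 - t ^ (k+1)) := by
      rw [hfq 1, hfq t, ← Summable.tsum_sub hSπ1 hSπ, Summable.tsum_eq_zero_add (hSπ1.sub hSπ)]
      simp only [pow_zero, mul_one, one_pow, sub_self, zero_add]
      apply tsum_congr
      intro k
      ring
    have e2 : β - t * fq' t = ∑' k : ℕ, ((k:ℝ)+1) * π (k+1) * (1 - t ^ (k+1)) := by
      rw [hβ, hfq' 1, hfq' t, ← tsum_mul_left, ← Summable.tsum_sub hSa1 (by
        apply Summable.congr (hSa.mul_left t)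
        intro k
        ring)]
      apply tsum_congr
      intro k
      simp only [one_pow]
      ring
    have hle : fq 1 - fq t ≤ β - t * fq' t := by
      rw [e1, e2]
      apply Summable.tsum_le_tsum _ (by
          apply Summable.of_nonneg_of_le (fun k => mul_nonneg (hπ_nn _) (ht1k k))
            (fun k => ?_) ((summable_nat_add_iff 1).2 hπS)
          calc π (k+1) * (1 - t^(k+1)) ≤ π (k+1) * 1 :=
                mul_le_mul_of_nonneg_left (by linarith [pow_nonneg ht.1 (k+1)]) (hπ_nn _)
          _ = π (k+1) := mul_one _)
        (by
          apply Summable.of_nonneg_of_le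
            (fun k => mul_nonneg (mul_nonneg (by positivity) (hπ_nn _)) (ht1k k))
            (fun k => ?_) ha1
          calc ((k:ℝ)+1) * π (k+1) * (1 - t^(k+1)) ≤ ((k:ℝ)+1) * π (k+1) * 1 :=
                mul_le_mul_of_nonneg_left (by linarith [pow_nonneg ht.1 (k+1)])
                  (mul_nonneg (by positivity) (hπ_nn _))
          _ = ((k:ℝ)+1) * π (k+1) := mul_one _)
      intro k
      have h1k : (1:ℝ) ≤ (k:ℝ) + 1 := by
        have := Nat.cast_nonneg (α := ℝ) k
        linarith
      nlinarith [mul_nonneg (hπ_nn (k+1)) (ht1k k), hπ_nn (k+1), ht1k k,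
        mul_nonneg (Nat.cast_nonneg (α := ℝ) k) (mul_nonneg (hπ_nn (k+1)) (ht1k k))]
    rw [fq1] at hle
    linarith
    -- Stage C : the function h
  have hIoo1 : Set.Ioo (0:ℝ) 1 ∈ 𝓝[<] (1:ℝ) := Ioo_mem_nhdsLT_of_mem (by norm_num)
  have hHmem : ∀ (m : ℕ), ∀ x ∈ Set.Icc (0:ℝ) 1, H m 1 x ∈ Set.Icc (0:ℝ) 1 := by
    intro m
    induction m with
    | zero => intro x hx; rw [hH0]; norm_num
    | succ m ih =>
      intro x hx
      rw [hHrec]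
      refine ⟨mul_nonneg hx.1 (hfqnn _ (ih x hx)), ?_⟩
      calc x * fq (H m 1 x) ≤ 1 * 1 :=
            mul_le_mul hx.2 (hfqle1 _ (ih x hx)) (hfqnn _ (ih x hx)) (by norm_num)
      _ = 1 := mul_one 1
  have hh01 : ∀ x ∈ Set.Icc (0:ℝ) 1, h x ∈ Set.Icc (0:ℝ) 1 := by
    intro x hx
    have hl := hh_lim x hx
    exact ⟨ge_of_tendsto hl (Eventually.of_forall (fun m => (hHmem m x hx).1)),
      le_of_tendsto hl (Eventually.of_forall (fun m => (hHmem m x hx).2))⟩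
  have hfqh_pos : ∀ x ∈ Set.Icc (0:ℝ) 1, 0 < fq (h x) := fun x hx => hfqpos _ (hh01 x hx)
  have hhpos : ∀ x : ℝ, 0 < x → x ≤ 1 → 0 < h x := by
    intro x hx0 hx1
    have hx' : x ∈ Set.Icc (0:ℝ) 1 := ⟨le_of_lt hx0, hx1⟩
    rw [hh_fix x hx']
    exact mul_pos hx0 (hfqh_pos x hx')
  have hhle : ∀ x ∈ Set.Icc (0:ℝ) 1, h x ≤ x := by
    intro x hx
    rw [hh_fix x hx]
    calc x * fq (h x) ≤ x * 1 := mul_le_mul_of_nonneg_left (hfqle1 _ (hh01 x hx)) hx.1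
    _ = x := mul_one x
  set φ : ℝ → ℝ := fun t => t / fq t with hφdef
  have hφh : ∀ x ∈ Set.Icc (0:ℝ) 1, φ (h x) = x := by
    intro x hx
    have hne : fq (h x) ≠ 0 := ne_of_gt (hfqh_pos x hx)
    show h x / fq (h x) = x
    rw [div_eq_iff hne]
    exact hh_fix x hx
  have hφcont : ContinuousOn φ (Set.Icc (0:ℝ) 1) := by
    apply ContinuousOn.div continuousOn_id
      (((pgfCont π hπS).congr (fun s _ => hfq s)).mono hsub)
    intro t ht
    exact ne_of_gt (hfqpos t ht)
  have hφderiv : ∀ t ∈ Set.Ioo (0:ℝ) 1, HasDerivAt φ ((fq t - t * fq' t) / (fq t) ^ 2) t := by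
    intro t ht
    have h2 := hfqD t (abs_lt.2 ⟨by linarith [ht.1], ht.2⟩)
    have h3 := (hasDerivAt_id t).div h2 (ne_of_gt (hfqpos t ⟨le_of_lt ht.1, le_of_lt ht.2⟩))
    refine HasDerivAt.congr_deriv h3 (Eq.symm ?_)
    simp [id]
  have hφmono : StrictMonoOn φ (Set.Icc (0:ℝ) 1) := by
    apply strictMonoOn_of_deriv_pos (convex_Icc 0 1) hφcont
    intro t ht
    rw [interior_Icc] at ht
    rw [(hφderiv t ht).deriv]
    have h1 : 1 - β ≤ fq t - t * fq' t := fqkey t ⟨le_of_lt ht.1, le_of_lt ht.2⟩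
    have h2 : 0 < fq t := hfqpos t ⟨le_of_lt ht.1, le_of_lt ht.2⟩
    have h3 : 0 < fq t - t * fq' t := by linarith
    positivity
  have hφ1 : φ 1 = 1 := by show (1:ℝ) / fq 1 = 1; rw [fq1, div_one]
  have hhlt1 : ∀ x ∈ Set.Ioo (0:ℝ) 1, h x < 1 := by
    intro x hx
    have hx' : x ∈ Set.Icc (0:ℝ) 1 := ⟨le_of_lt hx.1, le_of_lt hx.2⟩
    rcases lt_or_eq_of_le (hh01 x hx').2 with hlt | heq
    · exact hlt
    · exfalso
      have h1 := hφh x hx'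
      rw [heq, hφ1] at h1
      linarith [hx.2]
  have hkey : ∀ x ∈ Set.Icc (0:ℝ) 1, ∀ b ∈ Set.Icc (0:ℝ) 1, φ b < x → b < h x := by
    intro x hx b hb hblt
    by_contra hc
    push_neg at hc
    have := hφmono.monotoneOn (hh01 x hx) hb hc
    rw [hφh x hx] at this
    linarith
  have hkey2 : ∀ x ∈ Set.Icc (0:ℝ) 1, ∀ c ∈ Set.Icc (0:ℝ) 1, x < φ c → h x < c := by
    intro x hx c hc hclt
    by_contra hcon
    push_neg at hcon
    have := hφmono.monotoneOn hc (hh01 x hx) hcon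
    rw [hφh x hx] at this
    linarith
  have hhcont : ∀ x₀ ∈ Set.Ioo (0:ℝ) 1, ContinuousAt h x₀ := by
    intro x₀ hx₀
    have hx₀' : x₀ ∈ Set.Icc (0:ℝ) 1 := ⟨le_of_lt hx₀.1, le_of_lt hx₀.2⟩
    rw [ContinuousAt]
    apply tendsto_order.2
    constructor
    · intro b hb
      rcases lt_or_ge b 0 with hb0 | hb0
      · filter_upwards [isOpen_Ioo.mem_nhds hx₀] with y hy
        have := hhpos y hy.1 (le_of_lt hy.2)
        linarith
      · have hbI : b ∈ Set.Icc (0:ℝ) 1 := ⟨hb0, le_of_lt (lt_of_lt_of_le hb (hh01 x₀ hx₀').2)⟩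
        have hφb : φ b < x₀ := by
          have := hφmono hbI (hh01 x₀ hx₀') hb
          rwa [hφh x₀ hx₀'] at this
        filter_upwards [isOpen_Ioo.mem_nhds hx₀, Ioi_mem_nhds hφb] with y hy1 hy2
        exact hkey y ⟨le_of_lt hy1.1, le_of_lt hy1.2⟩ b hbI hy2
    · intro c hc
      rcases le_or_gt c 1 with hc1 | hc1
      · have hcI : c ∈ Set.Icc (0:ℝ) 1 :=
          ⟨le_trans (hh01 x₀ hx₀').1 (le_of_lt hc), hc1⟩
        have hφc : x₀ < φ c := by
          have := hφmono (hh01 x₀ hx₀') hcI hc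
          rwa [hφh x₀ hx₀'] at this
        filter_upwards [isOpen_Ioo.mem_nhds hx₀, Iio_mem_nhds hφc] with y hy1 hy2
        exact hkey2 y ⟨le_of_lt hy1.1, le_of_lt hy1.2⟩ c hcI hy2
      · filter_upwards [isOpen_Ioo.mem_nhds hx₀] with y hy
        have := (hh01 y ⟨le_of_lt hy.1, le_of_lt hy.2⟩).2
        linarith
  have hh1t : Tendsto h (𝓝[<] (1:ℝ)) (𝓝 1) := by
    apply tendsto_order.2
    constructor
    · intro b hb
      rcases lt_or_ge b 0 with hb0 | hb0
      · filter_upwards [hIoo1] with y hy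
        have := hhpos y hy.1 (le_of_lt hy.2)
        linarith
      · have hbI : b ∈ Set.Icc (0:ℝ) 1 := ⟨hb0, le_of_lt hb⟩
        have hφb : φ b < 1 := by
          have := hφmono hbI (by norm_num : (1:ℝ) ∈ Set.Icc (0:ℝ) 1) hb
          rwa [hφ1] at this
        have hmem : Set.Ioo (φ b) 1 ∈ 𝓝[<] (1:ℝ) := Ioo_mem_nhdsLT_of_mem ⟨hφb, le_refl 1⟩
        filter_upwards [hmem, hIoo1] with y hy1 hy2
        exact hkey y ⟨le_of_lt hy2.1, le_of_lt hy2.2⟩ b hbI hy1.1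
    · intro c hc
      filter_upwards [hIoo1] with y hy
      have := (hh01 y ⟨le_of_lt hy.1, le_of_lt hy.2⟩).2
      linarith
  have h1lt : ∀ x ∈ Set.Ioo (0:ℝ) 1, 0 < 1 - x * fq' (h x) := by
    intro x hx
    have hx' : x ∈ Set.Icc (0:ℝ) 1 := ⟨le_of_lt hx.1, le_of_lt hx.2⟩
    have h1 : fq' (h x) ≤ β := hfq'le _ (hh01 x hx')
    have h2 : 0 ≤ fq' (h x) := hfq'nn _ (hh01 x hx')
    nlinarith [hx.1, hx.2]
  set h1f : ℝ → ℝ := fun x => fq (h x) / (1 - x * fq' (h x)) with hh1fdef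
  have hhD : ∀ x ∈ Set.Ioo (0:ℝ) 1, HasDerivAt h (h1f x) x := by
    intro x hx
    have hx' : x ∈ Set.Icc (0:ℝ) 1 := ⟨le_of_lt hx.1, le_of_lt hx.2⟩
    have hhx : h x ∈ Set.Ioo (0:ℝ) 1 := ⟨hhpos x hx.1 (le_of_lt hx.2), hhlt1 x hx⟩
    have hd := hφderiv (h x) hhx
    have hnum : 0 < fq (h x) - h x * fq' (h x) := by
      have := fqkey _ (⟨le_of_lt hhx.1, le_of_lt hhx.2⟩ : h x ∈ Set.Icc (0:ℝ) 1)
      linarith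
    have h2 : 0 < fq (h x) := hfqh_pos x hx'
    have hne : (fq (h x) - h x * fq' (h x)) / fq (h x) ^ 2 ≠ 0 := by positivity
    have hloc : ∀ᶠ y in 𝓝 x, φ (h y) = y := by
      filter_upwards [isOpen_Ioo.mem_nhds hx] with y hy
      exact hφh y ⟨le_of_lt hy.1, le_of_lt hy.2⟩
    have hinv := HasDerivAt.of_local_left_inverse (hhcont x hx) hd hne hloc
    refine HasDerivAt.congr_deriv hinv (Eq.symm ?_)
    have hfix : h x = x * fq (h x) := hh_fix x hx'
    have h3 : 0 < 1 - x * fq' (h x) := h1lt x hx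
    rw [hh1fdef]
    simp only
    rw [inv_div, div_eq_div_iff (ne_of_gt h3) (ne_of_gt hnum)]
    linear_combination (-(fq (h x) * fq' (h x))) * hfix
  -- limits of h-related quantities at 1⁻
  have hhW : Tendsto h (𝓝[<] (1:ℝ)) (𝓝[Set.Icc (0:ℝ) 1] 1) := by
    apply tendsto_nhdsWithin_of_tendsto_nhds_of_eventually_within _ hh1t
    filter_upwards [hIoo1] with y hy
    exact hh01 y ⟨le_of_lt hy.1, le_of_lt hy.2⟩
  have hfqh_t : Tendsto (fun x => fq (h x)) (𝓝[<] (1:ℝ)) (𝓝 1) := by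
    have := Cfq.tendsto.comp hhW
    rw [fq1] at this
    exact this
  have hfq'h_t : Tendsto (fun x => fq' (h x)) (𝓝[<] (1:ℝ)) (𝓝 β) := by
    have := Cfq'.tendsto.comp hhW
    rw [← hβ] at this
    exact this
  have hfq''h_t : Tendsto (fun x => fq'' (h x)) (𝓝[<] (1:ℝ)) (𝓝 bq) := by
    have := Cfq''.tendsto.comp hhW
    rw [← hbq] at this
    exact this
  have hid1 : Tendsto (fun x : ℝ => x) (𝓝[<] (1:ℝ)) (𝓝 1) :=
    tendsto_id.mono_left nhdsWithin_le_nhds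
  have hu_t : Tendsto (fun x => x * fq' (h x)) (𝓝[<] (1:ℝ)) (𝓝 β) := by
    have := hid1.mul hfq'h_t
    rwa [one_mul] at this
  have hden_t : Tendsto (fun x => 1 - x * fq' (h x)) (𝓝[<] (1:ℝ)) (𝓝 (1 - β)) :=
    tendsto_const_nhds.sub hu_t
  have hh1f_t : Tendsto h1f (𝓝[<] (1:ℝ)) (𝓝 (1 / (1 - β))) :=
    hfqh_t.div hden_t hβ1
    -- Stage C2 : second derivatives and smallness
  set Tf : ℝ → ℝ := fun t => ∑' k : ℕ, ((k:ℝ) + 1) * (((k:ℝ) + 3) * ((k:ℝ) + 2) * π (k + 3)) * t ^ k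
    with hTfdef
  have hTf_eq : ∀ t : ℝ, Tf t
      = ∑' k : ℕ, ((k:ℝ) + 1) * ((fun j : ℕ => ((j:ℝ) + 2) * ((j:ℝ) + 1) * π (j + 2)) (k + 1)) * t ^ k := by
    intro t
    rw [hTfdef]
    apply tsum_congr
    intro k
    push_cast
    ring
  have hfq''D2 : ∀ t : ℝ, |t| < 1 → HasDerivAt fq'' (Tf t) t := by
    intro t ht
    have := hfq''D t ht
    rw [hTfdef]
    convert this using 1
    apply tsum_congr
    intro k
    push_cast
    ring
  have hTf_nn : ∀ t : ℝ, 0 ≤ t → 0 ≤ Tf t := by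
    intro t ht
    rw [hTfdef]
    apply tsum_nonneg
    intro k
    have := hπ_nn (k + 3)
    positivity
  have hTf_mono : ∀ y x : ℝ, 0 ≤ y → y ≤ x → x < 1 → Tf y ≤ Tf x := by
    intro y x hy0 hyx hx1
    rw [hTf_eq y, hTf_eq x]
    exact pgfDMono _ (fun k => by have := hπ_nn (k+2); positivity) ha2 hy0 hyx hx1
  have hTf_small : Tendsto (fun x : ℝ => (1 - x) * Tf x) (𝓝[<] (1:ℝ)) (𝓝 0) := by
    have := pgfSmall _ (fun k => by have := hπ_nn (k+2); positivity) ha2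
    apply Tendsto.congr _ this
    intro x
    rw [hTf_eq x]
  have hTsm : Tendsto (fun x : ℝ => (1 - x) * Tf (h x)) (𝓝[<] (1:ℝ)) (𝓝 0) := by
    apply tendsto_of_tendsto_of_tendsto_of_le_of_le' tendsto_const_nhds hTf_small
    · filter_upwards [hIoo1] with x hx
      exact mul_nonneg (by linarith [hx.2]) (hTf_nn (h x) (hh01 x ⟨le_of_lt hx.1, le_of_lt hx.2⟩).1)
    · filter_upwards [hIoo1] with x hx
      have hx' : x ∈ Set.Icc (0:ℝ) 1 := ⟨le_of_lt hx.1, le_of_lt hx.2⟩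
      apply mul_le_mul_of_nonneg_left _ (by linarith [hx.2])
      exact hTf_mono (h x) x (hh01 x hx').1 (hhle x hx') hx.2
  -- u1f, h2f, u2f
  set u1f : ℝ → ℝ := fun x => fq' (h x) + x * (fq'' (h x) * h1f x) with hu1fdef
  have habsh : ∀ x ∈ Set.Ioo (0:ℝ) 1, |h x| < 1 := by
    intro x hx
    have h1 := hhpos x hx.1 (le_of_lt hx.2)
    have h2 := hhlt1 x hx
    rw [abs_lt]
    constructor <;> linarith
  have huD : ∀ x ∈ Set.Ioo (0:ℝ) 1, HasDerivAt (fun y => y * fq' (h y)) (u1f x) x := by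
    intro x hx
    have hcomp : HasDerivAt (fun y => fq' (h y)) (fq'' (h x) * h1f x) x :=
      (hfq'D (h x) (habsh x hx)).comp x (hhD x hx)
    have := (hasDerivAt_id x).mul hcomp
    refine HasDerivAt.congr_deriv this (Eq.symm ?_)
    rw [hu1fdef]
    simp [id]
    try ring
  set h2f : ℝ → ℝ := fun x =>
      (fq' (h x) * h1f x * (1 - x * fq' (h x)) + fq (h x) * u1f x) / (1 - x * fq' (h x)) ^ 2
    with hh2fdef
  have hh1D : ∀ x ∈ Set.Ioo (0:ℝ) 1, HasDerivAt h1f (h2f x) x := by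
    intro x hx
    have hnum : HasDerivAt (fun y => fq (h y)) (fq' (h x) * h1f x) x :=
      (hfqD (h x) (habsh x hx)).comp x (hhD x hx)
    have hden : HasDerivAt (fun y => 1 - y * fq' (h y)) (0 - u1f x) x :=
      (hasDerivAt_const x 1).sub (huD x hx)
    have := hnum.div hden (ne_of_gt (h1lt x hx))
    rw [hh1fdef, hh2fdef]
    refine HasDerivAt.congr_deriv this (Eq.symm ?_)
    simp only
    congr 1
    ring
  set u2f : ℝ → ℝ := fun x => fq'' (h x) * h1f x
      + (1 * (fq'' (h x) * h1f x) + x * ((Tf (h x) * h1f x) * h1f x + fq'' (h x) * h2f x))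
    with hu2fdef
  have hu1D : ∀ x ∈ Set.Ioo (0:ℝ) 1, HasDerivAt u1f (u2f x) x := by
    intro x hx
    have hc1 : HasDerivAt (fun y => fq' (h y)) (fq'' (h x) * h1f x) x :=
      (hfq'D (h x) (habsh x hx)).comp x (hhD x hx)
    have hc2 : HasDerivAt (fun y => fq'' (h y)) (Tf (h x) * h1f x) x :=
      (hfq''D2 (h x) (habsh x hx)).comp x (hhD x hx)
    have hc3 : HasDerivAt (fun y => fq'' (h y) * h1f y)
        ((Tf (h x) * h1f x) * h1f x + fq'' (h x) * h2f x) x := hc2.mul (hh1D x hx)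
    have hc4 := (hasDerivAt_id x).mul hc3
    have := hc1.add hc4
    rw [hu1fdef, hu2fdef]
    refine HasDerivAt.congr_deriv this (Eq.symm ?_)
    rfl
  -- limits
  have hu1f_t : Tendsto u1f (𝓝[<] (1:ℝ)) (𝓝 (β + 1 * (bq * (1 / (1 - β))))) := by
    rw [hu1fdef]
    exact hfq'h_t.add (hid1.mul (hfq''h_t.mul hh1f_t))
  have hh2f_t : Tendsto h2f (𝓝[<] (1:ℝ))
      (𝓝 ((β * (1 / (1 - β)) * (1 - β) + 1 * (β + 1 * (bq * (1 / (1 - β))))) / (1 - β) ^ 2)) := by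
    rw [hh2fdef]
    exact ((((hfq'h_t.mul hh1f_t).mul hden_t).add (hfqh_t.mul hu1f_t)).div
      (hden_t.pow 2) (pow_ne_zero 2 hβ1))
  have hu2sm : Tendsto (fun x : ℝ => (1 - x) * u2f x) (𝓝[<] (1:ℝ)) (𝓝 0) := by
    have heq : ∀ x : ℝ, (1 - x) * u2f x
        = (1 - x) * (fq'' (h x) * h1f x + (1 * (fq'' (h x) * h1f x) + x * (fq'' (h x) * h2f x)))
          + (x * h1f x * h1f x) * ((1 - x) * Tf (h x)) := by
      intro x
      rw [hu2fdef]
      ring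
    have hT1 : Tendsto (fun x : ℝ => (1 - x)
        * (fq'' (h x) * h1f x + (1 * (fq'' (h x) * h1f x) + x * (fq'' (h x) * h2f x))))
        (𝓝[<] (1:ℝ)) (𝓝 0) := by
      have hz : Tendsto (fun x : ℝ => (1 - x)) (𝓝[<] (1:ℝ)) (𝓝 0) := by
        have := (tendsto_const_nhds (x := (1:ℝ)) (f := 𝓝[<] (1:ℝ))).sub hid1
        simpa using this
      have := hz.mul (((hfq''h_t.mul hh1f_t).add
        (((hfq''h_t.mul hh1f_t).const_mul 1).add (hid1.mul (hfq''h_t.mul hh2f_t)))))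
      simpa using this
    have hT2 : Tendsto (fun x : ℝ => (x * h1f x * h1f x) * ((1 - x) * Tf (h x)))
        (𝓝[<] (1:ℝ)) (𝓝 0) := by
      have := ((hid1.mul hh1f_t).mul hh1f_t).mul hTsm
      simpa using this
    have := hT1.add hT2
    simp only [add_zero] at this
    exact Tendsto.congr (fun x => (heq x).symm) this
    -- Stage D : derivatives and limits for H m 1 ·
  have HM : ∀ m : ℕ, 1 ≤ m → ∃ d1 d2 : ℝ → ℝ,
      (∀ x ∈ Set.Ioo (0:ℝ) 1, (H m 1 x ∈ Set.Ioo (0:ℝ) 1)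
        ∧ HasDerivAt (fun y => H m 1 y) (d1 x) x ∧ HasDerivAt d1 (d2 x) x) ∧
      Tendsto (fun x => H m 1 x) (𝓝[<] (1:ℝ)) (𝓝 1) ∧
      Tendsto d1 (𝓝[<] (1:ℝ)) (𝓝 ((1 - β ^ m) / (1 - β))) ∧
      ∃ L : ℝ, Tendsto d2 (𝓝[<] (1:ℝ)) (𝓝 L) := by
    intro m hm
    induction m, hm using Nat.le_induction with
    | base =>
      have hE : ∀ y : ℝ, H 1 1 y = y := by
        intro y; rw [hHrec, hH0, fq1, mul_one]
      refine ⟨fun _ => (1:ℝ), fun _ => (0:ℝ), ?_, ?_, ?_, 0, tendsto_const_nhds⟩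
      · intro x hx
        refine ⟨by rw [hE]; exact hx, ?_, hasDerivAt_const x (1:ℝ)⟩
        exact (hasDerivAt_id x).congr_of_eventuallyEq (Eventually.of_forall hE)
      · exact Tendsto.congr (fun x => (hE x).symm) hid1
      · have heq : (1 - β ^ 1) / (1 - β) = 1 := by rw [pow_one]; field_simp
        rw [heq]
        exact tendsto_const_nhds
    | succ m hm ih =>
      obtain ⟨d1, d2, hpt, ht0, ht1, L, ht2⟩ := ih
      have hW := tendsto_nhdsWithin_of_tendsto_nhds_of_eventually_within (fun x => H m 1 x) ht0 (by
        filter_upwards [hIoo1] with y hy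
        exact hHmem m y ⟨le_of_lt hy.1, le_of_lt hy.2⟩)
      have hfqHm : Tendsto (fun x => fq (H m 1 x)) (𝓝[<] (1:ℝ)) (𝓝 1) := by
        have := Cfq.tendsto.comp hW
        rwa [fq1] at this
      have hfq'Hm : Tendsto (fun x => fq' (H m 1 x)) (𝓝[<] (1:ℝ)) (𝓝 β) := by
        have := Cfq'.tendsto.comp hW
        rwa [← hβ] at this
      have hfq''Hm : Tendsto (fun x => fq'' (H m 1 x)) (𝓝[<] (1:ℝ)) (𝓝 bq) := by
        have := Cfq''.tendsto.comp hW
        rwa [← hbq] at this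
      refine ⟨fun x => 1 * fq (H m 1 x) + x * (fq' (H m 1 x) * d1 x),
        fun x => 1 * (fq' (H m 1 x) * d1 x) + (1 * (fq' (H m 1 x) * d1 x)
          + x * ((fq'' (H m 1 x) * d1 x) * d1 x + fq' (H m 1 x) * d2 x)), ?_, ?_, ?_, ?_⟩
      · intro x hx
        obtain ⟨hmem, hd1, hd2⟩ := hpt x hx
        have hx' : x ∈ Set.Icc (0:ℝ) 1 := ⟨le_of_lt hx.1, le_of_lt hx.2⟩
        have hmem' : H m 1 x ∈ Set.Icc (0:ℝ) 1 := ⟨le_of_lt hmem.1, le_of_lt hmem.2⟩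
        have habs : |H m 1 x| < 1 := abs_lt.2 ⟨by linarith [hmem.1], hmem.2⟩
        have hcfq : HasDerivAt (fun y => fq (H m 1 y)) (fq' (H m 1 x) * d1 x) x :=
          (hfqD _ habs).comp x hd1
        have hcfq' : HasDerivAt (fun y => fq' (H m 1 y)) (fq'' (H m 1 x) * d1 x) x :=
          (hfq'D _ habs).comp x hd1
        refine ⟨?_, ?_, ?_⟩
        · rw [hHrec]
          refine ⟨mul_pos hx.1 (hfqpos _ hmem'), ?_⟩
          have hle : x * fq (H m 1 x) ≤ x := by
            calc x * fq (H m 1 x) ≤ x * 1 :=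
                  mul_le_mul_of_nonneg_left (hfqle1 _ hmem') (le_of_lt hx.1)
            _ = x := mul_one x
          exact lt_of_le_of_lt hle hx.2
        · have hD := (hasDerivAt_id x).mul hcfq
          have := hD.congr_of_eventuallyEq (Eventually.of_forall (fun y => hHrec m 1 y))
          refine HasDerivAt.congr_deriv this (Eq.symm ?_)
          try simp [id]
        · exact (hcfq.const_mul 1).add ((hasDerivAt_id x).mul (hcfq'.mul hd2))
      · have := hid1.mul hfqHm
        rw [mul_one] at this
        exact Tendsto.congr (fun y => (hHrec m 1 y).symm) this
      · have hlim := (hfqHm.const_mul 1).add (hid1.mul (hfq'Hm.mul ht1))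
        have heq : (1:ℝ) * 1 + 1 * (β * ((1 - β ^ m) / (1 - β))) = (1 - β ^ (m+1)) / (1 - β) := by
          field_simp
          ring
        rw [heq] at hlim
        exact hlim
      · exact ⟨_, ((hfq'Hm.mul ht1).const_mul 1).add (((hfq'Hm.mul ht1).const_mul 1).add
          (hid1.mul (((hfq''Hm.mul ht1).mul ht1).add (hfq'Hm.mul ht2))))⟩
    -- Stage E : assembly in the θ variable
  intro n hn
  obtain ⟨d1, d2, hpt, hm0t, hm1t, Ld2, hm2t⟩ := HM n hn
  have hexp1 : Tendsto Real.exp (𝓝[<] (0:ℝ)) (𝓝[<] (1:ℝ)) := by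
    apply tendsto_nhdsWithin_of_tendsto_nhds_of_eventually_within
    · have h0 : Tendsto Real.exp (𝓝 0) (𝓝 (Real.exp 0)) := Real.continuous_exp.tendsto 0
      rw [Real.exp_zero] at h0
      exact h0.mono_left nhdsWithin_le_nhds
    · filter_upwards [self_mem_nhdsWithin] with θ (hθ : θ < 0)
      exact Real.exp_lt_one_iff.2 hθ
  have hEx : ∀ᶠ θ : ℝ in 𝓝[<] (0:ℝ), Real.exp θ ∈ Set.Ioo (0:ℝ) 1 := by
    filter_upwards [self_mem_nhdsWithin] with θ (hθ : θ < 0)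
    exact ⟨Real.exp_pos θ, Real.exp_lt_one_iff.2 hθ⟩
  -- atomic limits in the θ variable
  have A_X : Tendsto Real.exp (𝓝[<] (0:ℝ)) (𝓝 1) := hexp1.mono_right nhdsWithin_le_nhds
  have A_θ : Tendsto (fun θ : ℝ => θ) (𝓝[<] (0:ℝ)) (𝓝 0) := tendsto_id.mono_left nhdsWithin_le_nhds
  have A_h : Tendsto (fun θ => h (Real.exp θ)) (𝓝[<] (0:ℝ)) (𝓝 1) := hh1t.comp hexp1
  have A_hm : Tendsto (fun θ => H n 1 (Real.exp θ)) (𝓝[<] (0:ℝ)) (𝓝 1) := hm0t.comp hexp1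
  have A_h1 : Tendsto (fun θ => h1f (Real.exp θ)) (𝓝[<] (0:ℝ)) (𝓝 (1/(1-β))) := hh1f_t.comp hexp1
  have A_d1 : Tendsto (fun θ => d1 (Real.exp θ)) (𝓝[<] (0:ℝ)) (𝓝 ((1 - β ^ n)/(1 - β))) :=
    hm1t.comp hexp1
  obtain ⟨Lh2, A_h2⟩ : ∃ L, Tendsto (fun θ => h2f (Real.exp θ)) (𝓝[<] (0:ℝ)) (𝓝 L) :=
    ⟨_, hh2f_t.comp hexp1⟩
  have A_d2 : Tendsto (fun θ => d2 (Real.exp θ)) (𝓝[<] (0:ℝ)) (𝓝 Ld2) := hm2t.comp hexp1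
  have A_u : Tendsto (fun θ => Real.exp θ * fq' (h (Real.exp θ))) (𝓝[<] (0:ℝ)) (𝓝 β) :=
    hu_t.comp hexp1
  obtain ⟨Lu1, A_u1⟩ : ∃ L, Tendsto (fun θ => u1f (Real.exp θ)) (𝓝[<] (0:ℝ)) (𝓝 L) :=
    ⟨_, hu1f_t.comp hexp1⟩
  -- θ * u2f (exp θ) → 0
  have A_u2θ : Tendsto (fun θ => θ * u2f (Real.exp θ)) (𝓝[<] (0:ℝ)) (𝓝 0) := by
    have hs := hasDerivAt_iff_tendsto_slope.1 (Real.hasDerivAt_exp 0)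
    rw [Real.exp_zero] at hs
    have hs' : Tendsto (fun θ : ℝ => (Real.exp θ - 1) / θ) (𝓝[<] (0:ℝ)) (𝓝 1) := by
      have h1 := hs.mono_left (nhdsWithin_mono 0 (fun y (hy : y < 0) => ne_of_lt hy))
      apply Tendsto.congr _ h1
      intro θ
      rw [slope_def_field, Real.exp_zero, sub_zero]
    have hratio : Tendsto (fun θ : ℝ => θ / (Real.exp θ - 1)) (𝓝[<] (0:ℝ)) (𝓝 1) := by
      have h1 := hs'.inv₀ one_ne_zero
      rw [inv_one] at h1
      apply Tendsto.congr _ h1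
      intro θ
      rw [inv_div]
    have hprod : Tendsto (fun θ => (Real.exp θ - 1) * u2f (Real.exp θ)) (𝓝[<] (0:ℝ)) (𝓝 0) := by
      have h1 := (hu2sm.comp hexp1).neg
      rw [neg_zero] at h1
      apply Tendsto.congr _ h1
      intro θ
      show -((fun x => (1 - x) * u2f x) (Real.exp θ)) = _
      simp only
      ring
    have h2 := hratio.mul hprod
    rw [one_mul] at h2
    apply Tendsto.congr' _ h2
    filter_upwards [self_mem_nhdsWithin] with θ (hθ : θ < 0)
    have hne : Real.exp θ - 1 ≠ 0 := by
      have := Real.exp_lt_one_iff.2 hθ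
      intro hc
      rw [sub_eq_zero] at hc
      rw [hc] at this
      exact lt_irrefl 1 this
    field_simp
  -- eventual derivatives
  have hExD : ∀ᶠ θ : ℝ in 𝓝[<] (0:ℝ),
      HasDerivAt (fun t => (h (Real.exp t) - H n 1 (Real.exp t))
          - t / (1 - β) * (Real.exp t * fq' (h (Real.exp t))) ^ n)
        ((h1f (Real.exp θ) * Real.exp θ - d1 (Real.exp θ) * Real.exp θ)
          - (1 / (1 - β) * (Real.exp θ * fq' (h (Real.exp θ))) ^ n
            + θ / (1 - β) * ((n:ℝ) * (Real.exp θ * fq' (h (Real.exp θ))) ^ (n - 1)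
              * (u1f (Real.exp θ) * Real.exp θ)))) θ := by
    filter_upwards [hEx] with θ hx
    have hexp' : HasDerivAt Real.exp (Real.exp θ) θ := Real.hasDerivAt_exp θ
    have hdh : HasDerivAt (fun t => h (Real.exp t)) (h1f (Real.exp θ) * Real.exp θ) θ :=
      (hhD _ hx).comp θ hexp'
    have hdm : HasDerivAt (fun t => H n 1 (Real.exp t)) (d1 (Real.exp θ) * Real.exp θ) θ :=
      ((hpt _ hx).2.1).comp θ hexp'
    have hdu : HasDerivAt (fun t => Real.exp t * fq' (h (Real.exp t)))
        (u1f (Real.exp θ) * Real.exp θ) θ := (huD _ hx).comp θ hexp'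
    have hdgD := hdu.pow n
    have hdθc : HasDerivAt (fun t : ℝ => t / (1 - β)) (1 / (1 - β)) θ :=
      (hasDerivAt_id θ).div_const (1 - β)
    exact (hdh.sub hdm).sub (hdθc.mul hdgD)
  have hExD2 : ∀ᶠ θ : ℝ in 𝓝[<] (0:ℝ),
      HasDerivAt (fun t => (h1f (Real.exp t) * Real.exp t - d1 (Real.exp t) * Real.exp t)
          - (1 / (1 - β) * (Real.exp t * fq' (h (Real.exp t))) ^ n
            + t / (1 - β) * ((n:ℝ) * (Real.exp t * fq' (h (Real.exp t))) ^ (n - 1)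
              * (u1f (Real.exp t) * Real.exp t))))
        (((h2f (Real.exp θ) * Real.exp θ) * Real.exp θ + h1f (Real.exp θ) * Real.exp θ
            - ((d2 (Real.exp θ) * Real.exp θ) * Real.exp θ + d1 (Real.exp θ) * Real.exp θ))
          - (1 / (1 - β) * ((n:ℝ) * (Real.exp θ * fq' (h (Real.exp θ))) ^ (n - 1)
              * (u1f (Real.exp θ) * Real.exp θ))
            + (1 / (1 - β) * ((n:ℝ) * (Real.exp θ * fq' (h (Real.exp θ))) ^ (n - 1)
                * (u1f (Real.exp θ) * Real.exp θ))
              + θ / (1 - β) * ((n:ℝ) * (((n - 1 : ℕ):ℝ)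
                  * (Real.exp θ * fq' (h (Real.exp θ))) ^ (n - 1 - 1)
                  * (u1f (Real.exp θ) * Real.exp θ)) * (u1f (Real.exp θ) * Real.exp θ)
                + (n:ℝ) * (Real.exp θ * fq' (h (Real.exp θ))) ^ (n - 1)
                  * ((u2f (Real.exp θ) * Real.exp θ) * Real.exp θ
                    + u1f (Real.exp θ) * Real.exp θ))))) θ := by
    filter_upwards [hEx] with θ hx
    have hexp' : HasDerivAt Real.exp (Real.exp θ) θ := Real.hasDerivAt_exp θ
    have hdu : HasDerivAt (fun t => Real.exp t * fq' (h (Real.exp t)))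
        (u1f (Real.exp θ) * Real.exp θ) θ := (huD _ hx).comp θ hexp'
    have hd_h1X : HasDerivAt (fun t => h1f (Real.exp t) * Real.exp t)
        ((h2f (Real.exp θ) * Real.exp θ) * Real.exp θ + h1f (Real.exp θ) * Real.exp θ) θ :=
      (((hh1D _ hx).comp θ hexp').mul hexp')
    have hd_d1X : HasDerivAt (fun t => d1 (Real.exp t) * Real.exp t)
        ((d2 (Real.exp θ) * Real.exp θ) * Real.exp θ + d1 (Real.exp θ) * Real.exp θ) θ :=
      ((((hpt _ hx).2.2).comp θ hexp').mul hexp')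
    have hdgD := hdu.pow n
    have hdθc : HasDerivAt (fun t : ℝ => t / (1 - β)) (1 / (1 - β)) θ :=
      (hasDerivAt_id θ).div_const (1 - β)
    have hpow1 := hdu.pow (n - 1)
    have hnpow := hpow1.const_mul (n:ℝ)
    have hw : HasDerivAt (fun t => u1f (Real.exp t) * Real.exp t)
        ((u2f (Real.exp θ) * Real.exp θ) * Real.exp θ + u1f (Real.exp θ) * Real.exp θ) θ :=
      (((hu1D _ hx).comp θ hexp').mul hexp')
    have hgD1' := hnpow.mul hw
    have hB1 := hdgD.const_mul (1 / (1 - β))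
    have hB2 := hdθc.mul hgD1'
    have := (hd_h1X.sub hd_d1X).sub (hB1.add hB2)
    refine HasDerivAt.congr_deriv this (Eq.symm ?_)
    simp only [Pi.pow_apply, Pi.mul_apply]
    -- limits of M and M1
  have hMT : Tendsto (fun θ => (h (Real.exp θ) - H n 1 (Real.exp θ))
      - θ / (1 - β) * (Real.exp θ * fq' (h (Real.exp θ))) ^ n) (𝓝[<] (0:ℝ)) (𝓝 0) := by
    have h1 := (A_h.sub A_hm).sub ((A_θ.div_const (1 - β)).mul (A_u.pow n))
    convert h1 using 2
    norm_num
  have hM1T : Tendsto (fun θ => (h1f (Real.exp θ) * Real.exp θ - d1 (Real.exp θ) * Real.exp θ)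
      - (1 / (1 - β) * (Real.exp θ * fq' (h (Real.exp θ))) ^ n
        + θ / (1 - β) * ((n:ℝ) * (Real.exp θ * fq' (h (Real.exp θ))) ^ (n - 1)
          * (u1f (Real.exp θ) * Real.exp θ)))) (𝓝[<] (0:ℝ)) (𝓝 0) := by
    have h1 := ((A_h1.mul A_X).sub (A_d1.mul A_X)).sub
      (((A_u.pow n).const_mul (1 / (1 - β))).add ((A_θ.div_const (1 - β)).mul
        (((A_u.pow (n - 1)).const_mul (n:ℝ)).mul (A_u1.mul A_X))))
    convert h1 using 2
    field_simp
    try ring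
  -- limit of M2
  have hM2T : ∃ L2 : ℝ, Tendsto (fun θ =>
      ((h2f (Real.exp θ) * Real.exp θ) * Real.exp θ + h1f (Real.exp θ) * Real.exp θ
          - ((d2 (Real.exp θ) * Real.exp θ) * Real.exp θ + d1 (Real.exp θ) * Real.exp θ))
        - (1 / (1 - β) * ((n:ℝ) * (Real.exp θ * fq' (h (Real.exp θ))) ^ (n - 1)
            * (u1f (Real.exp θ) * Real.exp θ))
          + (1 / (1 - β) * ((n:ℝ) * (Real.exp θ * fq' (h (Real.exp θ))) ^ (n - 1)
              * (u1f (Real.exp θ) * Real.exp θ))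
            + θ / (1 - β) * ((n:ℝ) * (((n - 1 : ℕ):ℝ)
                * (Real.exp θ * fq' (h (Real.exp θ))) ^ (n - 1 - 1)
                * (u1f (Real.exp θ) * Real.exp θ)) * (u1f (Real.exp θ) * Real.exp θ)
              + (n:ℝ) * (Real.exp θ * fq' (h (Real.exp θ))) ^ (n - 1)
                * ((u2f (Real.exp θ) * Real.exp θ) * Real.exp θ
                  + u1f (Real.exp θ) * Real.exp θ))))) (𝓝[<] (0:ℝ)) (𝓝 L2) := by
    have comb1 := (((A_h2.mul A_X).mul A_X).add (A_h1.mul A_X)).sub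
      (((A_d2.mul A_X).mul A_X).add (A_d1.mul A_X))
    have combP := (((A_u.pow (n - 1)).const_mul (n:ℝ)).mul (A_u1.mul A_X)).const_mul (1 / (1 - β))
    have combQ1 := (((((A_u.pow (n - 1 - 1)).const_mul (((n - 1:ℕ)):ℝ)).mul
      (A_u1.mul A_X)).const_mul (n:ℝ)).mul (A_u1.mul A_X)).mul A_θ
    have combQ2 := (((A_u.pow (n - 1)).const_mul (n:ℝ)).mul
      (((A_u2θ.mul A_X).mul A_X).add ((A_u1.mul A_X).mul A_θ)))
    have comb := comb1.sub (combP.add (combP.add ((combQ1.add combQ2).const_mul (1 / (1 - β)))))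
    refine ⟨_, Tendsto.congr (fun θ => ?_) comb⟩
    field_simp
  obtain ⟨L2, hM2T⟩ := hM2T
  -- second L'Hopital
  have hlh2 : Tendsto (fun θ => ((h1f (Real.exp θ) * Real.exp θ - d1 (Real.exp θ) * Real.exp θ)
      - (1 / (1 - β) * (Real.exp θ * fq' (h (Real.exp θ))) ^ n
        + θ / (1 - β) * ((n:ℝ) * (Real.exp θ * fq' (h (Real.exp θ))) ^ (n - 1)
          * (u1f (Real.exp θ) * Real.exp θ)))) / (2 * θ)) (𝓝[<] (0:ℝ)) (𝓝 (L2 / 2)) := by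
    have hg2 : ∀ᶠ θ : ℝ in 𝓝[<] (0:ℝ), HasDerivAt (fun t : ℝ => 2 * t) ((fun _ : ℝ => (2:ℝ)) θ) θ :=
      Eventually.of_forall (fun θ => by simpa using (hasDerivAt_id θ).const_mul (2:ℝ))
    have hg2' : ∀ᶠ θ : ℝ in 𝓝[<] (0:ℝ), (fun _ : ℝ => (2:ℝ)) θ ≠ 0 :=
      Eventually.of_forall (fun _ => two_ne_zero)
    have hga2 : Tendsto (fun θ : ℝ => 2 * θ) (𝓝[<] (0:ℝ)) (𝓝 0) := by
      simpa using A_θ.const_mul (2:ℝ)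
    exact HasDerivAt.lhopital_zero_nhdsLT hExD2 hg2 hg2' hM1T hga2 (hM2T.div_const 2)
  -- first L'Hopital
  have hlh1 : Tendsto (fun θ => ((h (Real.exp θ) - H n 1 (Real.exp θ))
      - θ / (1 - β) * (Real.exp θ * fq' (h (Real.exp θ))) ^ n) / θ ^ 2)
      (𝓝[<] (0:ℝ)) (𝓝 (L2 / 2)) := by
    have hg1 : ∀ᶠ θ : ℝ in 𝓝[<] (0:ℝ), HasDerivAt (fun t : ℝ => t ^ 2) ((fun t : ℝ => 2 * t) θ) θ := by
      apply Eventually.of_forall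
      intro θ
      have h2 := hasDerivAt_pow 2 θ
      norm_num at h2
      exact h2
    have hg1' : ∀ᶠ θ : ℝ in 𝓝[<] (0:ℝ), (fun t : ℝ => 2 * t) θ ≠ 0 := by
      filter_upwards [self_mem_nhdsWithin] with θ (hθ : θ < 0)
      have h2 : 2 * θ < 0 := by linarith
      exact ne_of_lt h2
    have hga1 : Tendsto (fun θ : ℝ => θ ^ 2) (𝓝[<] (0:ℝ)) (𝓝 0) := by
      simpa using A_θ.pow 2
    exact HasDerivAt.lhopital_zero_nhdsLT hExD hg1 hg1' hMT hga1 hlh2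
  -- final assembly
  have hβn : (β:ℝ) ^ n ≠ 0 := pow_ne_zero n (ne_of_gt hβ_pos)
  have hinv : Tendsto (fun θ => ((Real.exp θ * fq' (h (Real.exp θ))) ^ n)⁻¹)
      (𝓝[<] (0:ℝ)) (𝓝 ((β ^ n)⁻¹)) := (A_u.pow n).inv₀ hβn
  refine ⟨L2 / 2 * (β ^ n)⁻¹, ?_⟩
  have hfin := hlh1.mul hinv
  apply Tendsto.congr' _ hfin
  filter_upwards [hEx, self_mem_nhdsWithin] with θ hx (hθ : θ < 0)
  have hx' : Real.exp θ ∈ Set.Icc (0:ℝ) 1 := ⟨le_of_lt hx.1, le_of_lt hx.2⟩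
  have hgDpos : 0 < (Real.exp θ * fq' (h (Real.exp θ))) ^ n :=
    pow_pos (mul_pos (Real.exp_pos θ)
      (hfq'pos (h (Real.exp θ)) (hhpos _ hx.1 (le_of_lt hx.2)) (hh01 _ hx').2)) n
  have hθne : θ ≠ 0 := ne_of_lt hθ
  rw [hu]
  have hgDne : (Real.exp θ * fq' (h (Real.exp θ))) ^ n ≠ 0 := ne_of_gt hgDpos
  field_simp
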